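/- Let n ≥ 1 and let α : [0,∞) → ℝ be a smooth function with compact support such that α(r) = 0 for all r ≤ ε, for some ε > 0. Define β : [0,∞) → ℝ by β(r) = −∫_r^∞ s·α(s)² ds. Let u be the vector field on ℝ^{2n} given by u_{2j−1}(x) = −x_{2j}, u_{2j}(x) = x_{2j−1} (j = 1,…,n), and define ũ(x) = α(|x|)·u(x) and p̃(x) = β(|x|). Then ũ : ℝ^{2n} → ℝ^{2n} and p̃ : ℝ^{2n} → ℝ are smooth, both have compact support, and (ũ, p̃) is a Gavrilov flow on all of ℝ^{2n}; in particular there exists a smooth compactly supported solution of the steady Euler equations on ℝ^{2n} that is not identically zero whenever α is not identically zero. -/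

import Mathlib

open MeasureTheory

/-- A pair `(u, p)` of smooth functions on an open set `U ⊆ ℝⁿ` is a *Gavrilov flow*
if it satisfies the steady Euler equations (momentum and incompressibility) together with
the orthogonality condition `u · grad p = 0` at every point of `U`. -/
def IsGavrilovFlow {n : ℕ} (U : Set (Fin n → ℝ)) (u : (Fin n → ℝ) → Fin n → ℝ)
    (p : (Fin n → ℝ) → ℝ) : Prop :=
  IsOpen U ∧ ContDiffOn ℝ (⊤ : ℕ∞) u U ∧ ContDiffOn ℝ (⊤ : ℕ∞) p U ∧
  (∀ x ∈ U, ∀ i, (∑ j, u x j * fderiv ℝ u x (Pi.single j 1) i)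
      + fderiv ℝ p x (Pi.single i 1) = 0) ∧
  (∀ x ∈ U, ∑ i, fderiv ℝ u x (Pi.single i 1) i = 0) ∧
  (∀ x ∈ U, ∑ i, u x i * fderiv ℝ p x (Pi.single i 1) = 0)

noncomputable section GavAux

/-- The rotation vector field on `ℝ^{2n}`. -/
def rotF (n : ℕ) (x : Fin (2*n) → ℝ) (i : Fin (2*n)) : ℝ :=
  if _h : (i : ℕ) % 2 = 0 then -(x ⟨(i : ℕ) + 1, by omega⟩)
  else x ⟨(i : ℕ) - 1, by omega⟩

/-- The rotation field, as a continuous linear map in each component. -/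
def rotL (n : ℕ) (i : Fin (2*n)) : (Fin (2*n) → ℝ) →L[ℝ] ℝ :=
  if _h : (i : ℕ) % 2 = 0 then
    -(ContinuousLinearMap.proj (R := ℝ) (φ := fun _ : Fin (2*n) => ℝ)
        ⟨(i : ℕ) + 1, by omega⟩)
  else ContinuousLinearMap.proj (R := ℝ) (φ := fun _ : Fin (2*n) => ℝ)
        ⟨(i : ℕ) - 1, by omega⟩

lemma rotL_apply (n : ℕ) (i : Fin (2*n)) (v : Fin (2*n) → ℝ) :
    rotL n i v = rotF n v i := by
  unfold rotL rotF
  split <;> simp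

lemma sum_range_two_mul (n : ℕ) (g : ℕ → ℝ) :
    ∑ i ∈ Finset.range (2 * n), g i = ∑ k ∈ Finset.range n, (g (2*k) + g (2*k+1)) := by
  induction n with
  | zero => simp
  | succ m ih =>
    rw [show 2*(m+1) = (2*m)+1+1 from by ring, Finset.sum_range_succ, Finset.sum_range_succ,
      ih, Finset.sum_range_succ]
    ring

lemma fin_sum_pair {n : ℕ} (f : Fin (2*n) → ℝ) (g : ℕ → ℝ)
    (hg : ∀ i : Fin (2*n), g i = f i) :
    ∑ i, f i = ∑ k ∈ Finset.range n, (g (2*k) + g (2*k+1)) := by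
  rw [← sum_range_two_mul, ← Fin.sum_univ_eq_sum_range g (2*n)]
  exact Finset.sum_congr rfl fun i _ => (hg i).symm

/-- Key orthogonality: `rot x ⟂ x`. -/
lemma rotF_orth (n : ℕ) (x : Fin (2*n) → ℝ) : ∑ i, rotF n x i * x i = 0 := by
  classical
  rw [fin_sum_pair (fun i => rotF n x i * x i)
    (fun m => if h : m < 2*n then rotF n x ⟨m, h⟩ * x ⟨m, h⟩ else 0)
    (fun i => by simp [i.isLt])]
  apply Finset.sum_eq_zero
  intro k hk
  have hk' : k < n := Finset.mem_range.mp hk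
  have h1 : 2*k < 2*n := by omega
  have h2 : 2*k+1 < 2*n := by omega
  rw [dif_pos h1, dif_pos h2]
  have e1 : rotF n x ⟨2*k, h1⟩ = -(x ⟨2*k+1, h2⟩) := by
    unfold rotF
    rw [dif_pos (by show 2*k % 2 = 0; omega)]
  have e2 : rotF n x ⟨2*k+1, h2⟩ = x ⟨2*k, h1⟩ := by
    unfold rotF
    rw [dif_neg (by show ¬ (2*k+1) % 2 = 0; omega)]
    exact congrArg x (Fin.ext (show 2*k+1-1 = 2*k by omega))
  rw [e1, e2]; ring

/-- Momentum computation: `∑ⱼ rot(x)ⱼ ∂ⱼ rot(·)ᵢ = -xᵢ`. -/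
lemma rotF_mom (n : ℕ) (x : Fin (2*n) → ℝ) (i : Fin (2*n)) :
    ∑ j, rotF n x j * rotF n (Pi.single j (1:ℝ)) i = -(x i) := by
  classical
  by_cases h : (i : ℕ) % 2 = 0
  · have hi1 : (i:ℕ)+1 < 2*n := by have := i.isLt; omega
    have key : ∀ j : Fin (2*n), rotF n (Pi.single j (1:ℝ)) i
        = if (⟨(i:ℕ)+1, hi1⟩ : Fin (2*n)) = j then -1 else 0 := by
      intro j
      unfold rotF
      rw [dif_pos h, Pi.single_apply]
      split_ifs <;> norm_num
    simp only [key, mul_ite, mul_neg_one, mul_zero, Finset.sum_ite_eq, Finset.mem_univ,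
      if_true]
    have : rotF n x ⟨(i:ℕ)+1, hi1⟩ = x i := by
      unfold rotF
      rw [dif_neg (by show ¬ ((i:ℕ)+1) % 2 = 0; omega)]
      exact congrArg x (Fin.ext (show (i:ℕ)+1-1 = (i:ℕ) by omega))
    rw [this]
  · have hi1 : (i:ℕ)-1 < 2*n := by have := i.isLt; omega
    have key : ∀ j : Fin (2*n), rotF n (Pi.single j (1:ℝ)) i
        = if (⟨(i:ℕ)-1, hi1⟩ : Fin (2*n)) = j then 1 else 0 := by
      intro j
      unfold rotF
      rw [dif_neg h, Pi.single_apply]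
    simp only [key, mul_ite, mul_one, mul_zero, Finset.sum_ite_eq, Finset.mem_univ, if_true]
    have : rotF n x ⟨(i:ℕ)-1, hi1⟩ = -(x i) := by
      unfold rotF
      rw [dif_pos (by show ((i:ℕ)-1) % 2 = 0; omega)]
      have : (⟨(i:ℕ)-1+1, by omega⟩ : Fin (2*n)) = i := Fin.ext (by simp; omega)
      rw [this]
    rw [this]

/-- Trace-free: `∂ᵢ rot(·)ᵢ = 0`. -/
lemma rotF_diag (n : ℕ) (i : Fin (2*n)) : rotF n (Pi.single i (1:ℝ)) i = 0 := by
  unfold rotF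
  split
  next h =>
    rw [Pi.single_apply]
    split_ifs with hh
    · exfalso
      have h2 : (i:ℕ) + 1 = (i:ℕ) := congrArg Fin.val hh
      omega
    · simp
  next h =>
    rw [Pi.single_apply]
    split_ifs with hh
    · exfalso
      have h2 : (i:ℕ) - 1 = (i:ℕ) := congrArg Fin.val hh
      omega
    · rfl

end GavAux

theorem gavrilov_localization (n : ℕ) (hn : 1 ≤ n) (ε : ℝ) (hε : 0 < ε)
    (α : ℝ → ℝ) (hα : ContDiff ℝ (⊤ : ℕ∞) α) (hαc : HasCompactSupport α)
    (hα0 : ∀ r ≤ ε, α r = 0)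
    (β : ℝ → ℝ) (hβ : ∀ r, β r = -∫ s in Set.Ioi r, s * α s ^ 2)
    (u ut : (Fin (2 * n) → ℝ) → Fin (2 * n) → ℝ) (pt : (Fin (2 * n) → ℝ) → ℝ)
    (hu : ∀ x (i : Fin (2 * n)), u x i =
      if h : (i : ℕ) % 2 = 0 then -(x ⟨(i : ℕ) + 1, by have := i.isLt; omega⟩)
      else x ⟨(i : ℕ) - 1, by have := i.isLt; omega⟩)
    (hut : ∀ x, ut x = α (Real.sqrt (∑ i, x i ^ 2)) • u x)
    (hpt : ∀ x, pt x = β (Real.sqrt (∑ i, x i ^ 2))) :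
    ContDiff ℝ (⊤ : ℕ∞) ut ∧ ContDiff ℝ (⊤ : ℕ∞) pt ∧
    HasCompactSupport ut ∧ HasCompactSupport pt ∧
    IsGavrilovFlow Set.univ ut pt ∧
    ((∃ r, α r ≠ 0) → ∃ x, ut x ≠ 0) := by
  classical
  -- basic data
  set q : (Fin (2*n) → ℝ) → ℝ := fun x => ∑ i, x i ^ 2 with hq_def
  have hu' : ∀ x i, u x i = rotF n x i := fun x i => hu x i
  have hut' : ∀ x i, ut x i = α (Real.sqrt (q x)) * rotF n x i := by
    intro x i
    rw [hut x]
    simp [hu' x i]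
    left; rfl
  have hpt' : ∀ x, pt x = β (Real.sqrt (q x)) := hpt
  -- the one-dimensional profiles
  set φ : ℝ → ℝ := fun t => α (Real.sqrt t) with hφ_def
  set ψ : ℝ → ℝ := fun t => β (Real.sqrt t) with hψ_def
  set f : ℝ → ℝ := fun s => s * α s ^ 2 with hf_def
  have hf_cont : Continuous f := continuous_id.mul ((hα.continuous).pow 2)
  have hf_cs : HasCompactSupport f := by
    have h2 : HasCompactSupport (fun s => α s ^ 2) := by
      have : (fun s => α s ^ 2) = (fun s : ℝ => α s) * (fun s => α s) := by
        funext s; simp [sq]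
      rw [this]
      exact hαc.mul_right
    exact h2.mul_left
  have hf_int : Integrable f := hf_cont.integrable_of_hasCompactSupport hf_cs
  -- β as a primitive of f
  have hβ' : ∀ r, β r = β 0 + ∫ t in (0:ℝ)..r, f t := by
    intro r
    have h1 : ∀ a : ℝ, (∫ x in Set.Iic a, f x) + ∫ x in Set.Ioi a, f x = ∫ x, f x :=
      fun a => intervalIntegral.integral_Iic_add_Ioi hf_int.integrableOn hf_int.integrableOn
    have h2 : (∫ x in Set.Iic r, f x) - ∫ x in Set.Iic (0:ℝ), f x = ∫ t in (0:ℝ)..r, f t :=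
      intervalIntegral.integral_Iic_sub_Iic hf_int.integrableOn hf_int.integrableOn
    have e1 := h1 r
    have e2 := h1 0
    rw [hβ r, hβ 0]
    have : (∫ s in Set.Ioi r, s * α s ^ 2) = ∫ x in Set.Ioi r, f x := rfl
    rw [this, show (∫ s in Set.Ioi (0:ℝ), s * α s ^ 2) = ∫ x in Set.Ioi (0:ℝ), f x from rfl]
    linarith
  have hβd : ∀ r, HasDerivAt β (f r) r := by
    intro r
    have h := ((hf_cont.integral_hasStrictDerivAt 0 r).hasDerivAt).const_add (β 0)
    have hfun : β = fun u => β 0 + ∫ t in (0:ℝ)..u, f t := funext hβ'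
    rw [hfun]
    exact h
  have hβ_cd : ContDiff ℝ (⊤ : ℕ∞) β := by
    have hd : deriv β = f := funext fun r => (hβd r).deriv
    refine contDiff_infty_iff_deriv.2 ⟨fun r => (hβd r).differentiableAt, ?_⟩
    rw [hd]
    exact contDiff_id.mul (hα.pow 2)
  have hβ_const : ∀ r ≤ ε, β r = β 0 := by
    intro r hr
    rw [hβ' r]
    have : (∫ t in (0:ℝ)..r, f t) = ∫ t in (0:ℝ)..r, (0:ℝ) := by
      apply intervalIntegral.integral_congr
      intro s hs
      have hs' : s ≤ ε := by
        rcases Set.mem_uIcc.mp hs with ⟨_, h2⟩ | ⟨_, h2⟩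
        · exact le_trans h2 hr
        · exact le_trans h2 hε.le
      simp [hf_def, hα0 s hs']
    rw [this]
    simp
  -- smoothness of the profiles
  have hε2 : (0:ℝ) < ε ^ 2 := by positivity
  have hsqrt_le : ∀ t : ℝ, t ≤ ε ^ 2 → Real.sqrt t ≤ ε := by
    intro t ht
    calc Real.sqrt t ≤ Real.sqrt (ε ^ 2) := Real.sqrt_le_sqrt ht
    _ = ε := Real.sqrt_sq hε.le
  have hφ0 : ∀ t ≤ ε ^ 2, φ t = 0 := fun t ht => hα0 _ (hsqrt_le t ht)
  have hψ0 : ∀ t ≤ ε ^ 2, ψ t = β 0 := fun t ht => hβ_const _ (hsqrt_le t ht)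
  have hφ_cd : ContDiff ℝ (⊤ : ℕ∞) φ := by
    rw [contDiff_iff_contDiffAt]
    intro t
    rcases lt_or_ge t (ε ^ 2) with h | h
    · refine (contDiffAt_const (c := (0:ℝ))).congr_of_eventuallyEq ?_
      filter_upwards [Iio_mem_nhds h] with s hs
      exact hφ0 s (le_of_lt hs)
    · exact (hα.contDiffAt).comp t (Real.contDiffAt_sqrt (ne_of_gt (lt_of_lt_of_le hε2 h)))
  have hψd : ∀ t, HasDerivAt ψ (φ t ^ 2 / 2) t := by
    intro t
    rcases lt_or_ge t (ε ^ 2) with h | h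
    · have h0 : HasDerivAt ψ 0 t := by
        refine (hasDerivAt_const t (β 0)).congr_of_eventuallyEq ?_
        filter_upwards [Iio_mem_nhds h] with s hs
        exact hψ0 s (le_of_lt hs)
      have : φ t ^ 2 / 2 = 0 := by rw [hφ0 t h.le]; ring
      rw [this]
      exact h0
    · have ht : 0 < t := lt_of_lt_of_le hε2 h
      have hst : Real.sqrt t ≠ 0 := (Real.sqrt_pos.2 ht).ne'
      have h1 : HasDerivAt Real.sqrt (1 / (2 * Real.sqrt t)) t :=
        Real.hasDerivAt_sqrt ht.ne'
      have h2 : HasDerivAt β (f (Real.sqrt t)) (Real.sqrt t) := hβd _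
      have h3 := h2.comp t h1
      have hval : f (Real.sqrt t) * (1 / (2 * Real.sqrt t)) = φ t ^ 2 / 2 := by
        have hsq : Real.sqrt t * Real.sqrt t = t := Real.mul_self_sqrt ht.le
        field_simp [hf_def, hφ_def]
        ring
      rw [← hval]
      exact h3
  have hψ_cd : ContDiff ℝ (⊤ : ℕ∞) ψ := by
    have hd : deriv ψ = fun t => φ t ^ 2 / 2 := funext fun t => (hψd t).deriv
    refine contDiff_infty_iff_deriv.2 ⟨fun t => (hψd t).differentiableAt, ?_⟩
    rw [hd]
    exact (hφ_cd.pow 2).div_const 2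
  -- q is smooth with explicit derivative
  have hq_cd : ContDiff ℝ (⊤ : ℕ∞) q := by
    apply ContDiff.sum
    intro i _
    exact (ContinuousLinearMap.proj (R := ℝ) (φ := fun _ : Fin (2*n) => ℝ) i).contDiff.pow 2
  set Lq : (Fin (2*n) → ℝ) → (Fin (2*n) → ℝ) →L[ℝ] ℝ := fun x =>
    ∑ i, (2 * x i) • (ContinuousLinearMap.proj (R := ℝ) (φ := fun _ : Fin (2*n) => ℝ) i)
    with hLq_def
  have hQ : ∀ x, HasFDerivAt q (Lq x) x := by
    intro x
    apply HasFDerivAt.fun_sum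
    intro i _
    have hp : HasFDerivAt (fun y : (Fin (2*n) → ℝ) => y i)
        (ContinuousLinearMap.proj (R := ℝ) (φ := fun _ : Fin (2*n) => ℝ) i) x :=
      (ContinuousLinearMap.proj (R := ℝ) (φ := fun _ : Fin (2*n) => ℝ) i).hasFDerivAt
    have := (hasDerivAt_pow 2 (x i)).comp_hasFDerivAt x hp
    simp at this
    exact this
  have hLq_apply : ∀ x j, Lq x (Pi.single j 1) = 2 * x j := by
    intro x j
    rw [hLq_def]
    simp [ContinuousLinearMap.sum_apply, Pi.single_apply, mul_ite, Finset.sum_ite_eq]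
  have hq_nonneg : ∀ x, 0 ≤ q x := fun x => Finset.sum_nonneg fun i _ => sq_nonneg _
  -- derivatives of pt
  have hpt_fun : pt = fun x => ψ (q x) := funext fun x => hpt' x
  have hptd : ∀ x, HasFDerivAt pt ((φ (q x) ^ 2 / 2) • Lq x) x := by
    intro x
    rw [hpt_fun]
    exact (hψd (q x)).comp_hasFDerivAt x (hQ x)
  have hpt_fderiv : ∀ x i, fderiv ℝ pt x (Pi.single i 1) = φ (q x) ^ 2 * x i := by
    intro x i
    rw [(hptd x).fderiv]
    simp [hLq_apply]
    ring
  -- derivatives of the components of ut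
  have hφ_diff : Differentiable ℝ φ := hφ_cd.differentiable (by simp)
  set dφ : ℝ → ℝ := deriv φ with hdφ_def
  have hrot_fun : ∀ i : Fin (2*n), (fun y => rotF n y i) = fun y => rotL n i y :=
    fun i => funext fun y => (rotL_apply n i y).symm
  have hut_comp : ∀ i : Fin (2*n), (fun y => ut y i) = fun y => φ (q y) * rotF n y i :=
    fun i => funext fun y => hut' y i
  set C : (Fin (2*n) → ℝ) → Fin (2*n) → (Fin (2*n) → ℝ) →L[ℝ] ℝ := fun x i =>
    φ (q x) • rotL n i + rotF n x i • (dφ (q x) • Lq x) with hC_def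
  have hutd : ∀ x (i : Fin (2*n)), HasFDerivAt (fun y => ut y i) (C x i) x := by
    intro x i
    rw [hut_comp i]
    have hc : HasFDerivAt (fun y => φ (q y)) (dφ (q x) • Lq x) x :=
      ((hφ_diff (q x)).hasDerivAt).comp_hasFDerivAt x (hQ x)
    have hd : HasFDerivAt (fun y => rotF n y i) (rotL n i) x := by
      rw [hrot_fun i]
      exact (rotL n i).hasFDerivAt
    exact hc.mul hd
  have hut_diff : ∀ x (i : Fin (2*n)), DifferentiableAt ℝ (fun y => ut y i) x :=
    fun x i => (hutd x i).differentiableAt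
  have hut_fderiv : ∀ x (j i : Fin (2*n)), fderiv ℝ ut x (Pi.single j 1) i =
      φ (q x) * rotF n (Pi.single j 1) i + rotF n x i * (dφ (q x) * (2 * x j)) := by
    intro x j i
    have : fderiv ℝ ut x = ContinuousLinearMap.pi fun i => fderiv ℝ (fun y => ut y i) x :=
      fderiv_pi (fun i => hut_diff x i)
    rw [this]
    rw [ContinuousLinearMap.pi_apply, (hutd x i).fderiv]
    rw [hC_def]
    simp [rotL_apply, hLq_apply]
  -- smoothness of ut
  have hut_cd : ContDiff ℝ (⊤ : ℕ∞) ut := by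
    rw [contDiff_pi]
    intro i
    rw [hut_comp i]
    have hr : ContDiff ℝ (⊤ : ℕ∞) (fun y => rotF n y i) := by
      rw [hrot_fun i]
      exact (rotL n i).contDiff
    exact (hφ_cd.comp hq_cd).mul hr
  have hpt_cd : ContDiff ℝ (⊤ : ℕ∞) pt := by
    rw [hpt_fun]
    exact hψ_cd.comp hq_cd
  -- compact support
  obtain ⟨M₀, hM₀⟩ := (hαc.isBounded).subset_closedBall 0
  set M : ℝ := max M₀ 0 with hM_def
  have hα_zero : ∀ r : ℝ, M < r → α r = 0 := by
    intro r hr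
    apply image_eq_zero_of_notMem_tsupport
    intro hmem
    have h1 := hM₀ hmem
    rw [Metric.mem_closedBall, Real.dist_eq, sub_zero] at h1
    have h2 : r ≤ M₀ := le_trans (le_abs_self r) h1
    have h3 : M₀ ≤ M := le_max_left _ _
    linarith
  have hβ_zero : ∀ r : ℝ, M < r → β r = 0 := by
    intro r hr
    rw [hβ r]
    rw [setIntegral_eq_zero_of_forall_eq_zero]
    · simp
    · intro s hs
      have : M < s := lt_trans hr hs
      rw [hα_zero s this]
      ring
  have hbig : ∀ x : Fin (2*n) → ℝ, x ∉ Metric.closedBall (0 : Fin (2*n) → ℝ) M →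
      M < Real.sqrt (q x) := by
    intro x hx
    rw [Metric.mem_closedBall, dist_zero_right] at hx
    push_neg at hx
    have : ¬ ∀ i, ‖x i‖ ≤ M := by
      intro hall
      exact absurd (pi_norm_le_iff_of_nonneg (le_max_right M₀ 0) |>.2 hall) (not_le.2 hx)
    push_neg at this
    obtain ⟨i, hi⟩ := this
    have h1 : M ^ 2 < x i ^ 2 := by
      have : M < |x i| := by rwa [Real.norm_eq_abs] at hi
      nlinarith [abs_nonneg (x i), sq_abs (x i), le_max_right M₀ 0]
    have h2 : x i ^ 2 ≤ q x :=
      Finset.single_le_sum (fun j _ => sq_nonneg (x j)) (Finset.mem_univ i)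
    exact (Real.lt_sqrt (le_max_right M₀ 0)).2 (lt_of_lt_of_le h1 h2)
  have hut_cs : HasCompactSupport ut := by
    apply HasCompactSupport.intro (isCompact_closedBall (0 : Fin (2*n) → ℝ) M)
    intro x hx
    funext i
    rw [hut' x i, hα_zero _ (hbig x hx)]
    simp
  have hpt_cs : HasCompactSupport pt := by
    apply HasCompactSupport.intro (isCompact_closedBall (0 : Fin (2*n) → ℝ) M)
    intro x hx
    rw [hpt' x, hβ_zero _ (hbig x hx)]
  -- the PDE
  refine ⟨hut_cd, hpt_cd, hut_cs, hpt_cs,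
    ⟨isOpen_univ, hut_cd.contDiffOn, hpt_cd.contDiffOn, ?_, ?_, ?_⟩, ?_⟩
  · -- momentum
    intro x _ i
    rw [hpt_fderiv x i]
    have expand : ∀ j, ut x j * fderiv ℝ ut x (Pi.single j 1) i =
        φ (q x) ^ 2 * (rotF n x j * rotF n (Pi.single j 1) i)
          + (2 * φ (q x) * dφ (q x) * rotF n x i) * (rotF n x j * x j) := by
      intro j
      rw [hut_fderiv x j i, hut' x j]
      show φ (q x) * rotF n x j * _ = _
      ring
    rw [Finset.sum_congr rfl (fun j _ => expand j), Finset.sum_add_distrib,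
      ← Finset.mul_sum, ← Finset.mul_sum, rotF_mom n x i, rotF_orth n x]
    ring
  · -- divergence
    intro x _
    have expand : ∀ i : Fin (2*n), fderiv ℝ ut x (Pi.single i 1) i =
        (2 * dφ (q x)) * (rotF n x i * x i) := by
      intro i
      rw [hut_fderiv x i i, rotF_diag n i]
      ring
    rw [Finset.sum_congr rfl (fun i _ => expand i), ← Finset.mul_sum, rotF_orth n x]
    ring
  · -- orthogonality
    intro x _
    have expand : ∀ i : Fin (2*n), ut x i * fderiv ℝ pt x (Pi.single i 1) =
        (φ (q x) * φ (q x) ^ 2) * (rotF n x i * x i) := by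
      intro i
      rw [hpt_fderiv x i, hut' x i]
      show φ (q x) * rotF n x i * _ = _
      ring
    rw [Finset.sum_congr rfl (fun i _ => expand i), ← Finset.mul_sum, rotF_orth n x]
    ring
  · -- nonvanishing
    rintro ⟨r, hr⟩
    have hrε : ε < r := by
      by_contra hle
      exact hr (hα0 r (not_lt.mp hle))
    have hr0 : 0 < r := lt_trans hε hrε
    have h02 : (0:ℕ) < 2*n := by omega
    have h12 : (1:ℕ) < 2*n := by omega
    set i0 : Fin (2*n) := ⟨0, h02⟩ with hi0
    set i1 : Fin (2*n) := ⟨1, h12⟩ with hi1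
    set x : Fin (2*n) → ℝ := Pi.single i0 r with hx_def
    have hqx : q x = r ^ 2 := by
      rw [hq_def]
      simp only [hx_def, Pi.single_apply]
      rw [Finset.sum_congr rfl (fun i _ => by
        show (if i = i0 then r else 0) ^ 2 = if i = i0 then r ^ 2 else 0
        split <;> simp)]
      simp [Finset.sum_ite_eq]
    refine ⟨x, fun hzero => ?_⟩
    have h1 : ut x i1 = 0 := by rw [hzero]; rfl
    rw [hut' x i1] at h1
    have h2 : rotF n x i1 = r := by
      unfold rotF
      rw [dif_neg (by show ¬ (1:ℕ) % 2 = 0; omega)]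
      show x ⟨0, _⟩ = r
      simp [hx_def, hi0, Pi.single_apply]
    rw [h2, hqx, Real.sqrt_sq hr0.le] at h1
    rcases mul_eq_zero.mp h1 with h | h
    · exact hr h
    · exact hr0.ne' h
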